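/- (Example: arcs on the hypersurface y·x_{n+1} + g(x₁,…,xₙ) = 0.) Let A be a test ring with maximal ideal m. Then the set of tuples (x₁,…,xₙ,x_{n+1},y) with x_i ∈ m[[t]] for 1 ≤ i ≤ n, x_{n+1} ∈ t + m[[t]], y ∈ m[[t]], and y·x_{n+1} + g(x₁,…,xₙ) = 0 in A[[t]], is in bijection with the set of tuples (α, u, x̃₁,…,x̃ₙ, ξ₁,…,ξₙ) where α ∈ m, u ∈ 1 + m[[t]], x̃_i ∈ m[[t]], ξ_i ∈ m, and g(ξ₁,…,ξₙ) = 0. The bijection sends (α,u,x̃,ξ) to the tuple with x_{n+1} = (t−α)·u, x_i = ξ_i + (t−α)·x̃_i, and y the unique element of m[[t]] with y·x_{n+1} + g(x₁,…,xₙ) = 0. -/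

import Mathlib

open IsLocalRing

noncomputable section

/-- Arcs on the hypersurface `y·x_{n+1} + g(x₁,…,xₙ) = 0` deforming the arc
`x_{n+1} = t`, `y = x₁ = … = xₙ = 0`:  tuples `(x, x_{n+1}, y)` with `x_i ∈ m[[t]]`,
`x_{n+1} ∈ t + m[[t]]`, `y ∈ m[[t]]`, satisfying the equation. -/
def arcSet {k : Type*} [Field k] {n : ℕ} (g : MvPolynomial (Fin n) k)
    (A : Type*) [CommRing A] [Algebra k A] [IsLocalRing A] :
    Set ((Fin n → PowerSeries A) × PowerSeries A × PowerSeries A) :=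
  {p | (∀ i j, PowerSeries.coeff j (p.1 i) ∈ maximalIdeal A) ∧
       (∀ j, PowerSeries.coeff j (p.2.1 - PowerSeries.X) ∈ maximalIdeal A) ∧
       (∀ j, PowerSeries.coeff j (p.2.2) ∈ maximalIdeal A) ∧
       p.2.2 * p.2.1 + MvPolynomial.aeval p.1 g = 0}

/-- Data `(α, u, x̃₁,…,x̃ₙ, ξ₁,…,ξₙ)` with `α ∈ m`, `u ∈ 1 + m[[t]]`, `x̃_i ∈ m[[t]]`,
`ξ_i ∈ m` and `g(ξ) = 0`. -/
def dataSet {k : Type*} [Field k] {n : ℕ} (g : MvPolynomial (Fin n) k)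
    (A : Type*) [CommRing A] [Algebra k A] [IsLocalRing A] :
    Set (A × PowerSeries A × (Fin n → PowerSeries A) × (Fin n → A)) :=
  {q | q.1 ∈ maximalIdeal A ∧
       (∀ j, PowerSeries.coeff j (q.2.1 - 1) ∈ maximalIdeal A) ∧
       (∀ i j, PowerSeries.coeff j (q.2.2.1 i) ∈ maximalIdeal A) ∧
       (∀ i, q.2.2.2 i ∈ maximalIdeal A) ∧
       MvPolynomial.aeval q.2.2.2 g = 0}

/-- The relation expressing that the arc `p = (x, x_{n+1}, y)` corresponds to the data
`(α, u, x̃, ξ)` by `x_{n+1} = (t−α)·u` and `x_i = ξ_i + (t−α)·x̃_i` (the component `y` is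
then uniquely determined by the equation). -/
def arcDataRel (k : Type*) [Field k] {n : ℕ}
    (A : Type*) [CommRing A] [Algebra k A] [IsLocalRing A]
    (q : A × PowerSeries A × (Fin n → PowerSeries A) × (Fin n → A))
    (p : (Fin n → PowerSeries A) × PowerSeries A × PowerSeries A) : Prop :=
  p.2.1 = (PowerSeries.X - PowerSeries.C q.1) * q.2.1 ∧
  ∀ i, p.1 i = PowerSeries.C (q.2.2.2 i) + (PowerSeries.X - PowerSeries.C q.1) * q.2.2.1 i

section AuxHypersurface
open PowerSeries
variable {A : Type*} [CommRing A]

def cJ (I : Ideal A) : Ideal (PowerSeries A) where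
  carrier := {f | ∀ i, coeff i f ∈ I}
  add_mem' := fun hf hg i => by simpa using add_mem (hf i) (hg i)
  zero_mem' := fun i => by simp
  smul_mem' := fun c f hf => fun i => by
    rw [smul_eq_mul, coeff_mul]
    exact Ideal.sum_mem _ fun p _ => Ideal.mul_mem_left _ _ (hf p.2)

lemma mem_cJ {I : Ideal A} {f : PowerSeries A} : f ∈ cJ I ↔ ∀ i, coeff i f ∈ I := Iff.rfl

lemma cJ_mono {I I' : Ideal A} (h : I ≤ I') : cJ I ≤ cJ I' := fun _ hf i => h (hf i)

lemma cJ_bot {f : PowerSeries A} (hf : f ∈ cJ (⊥ : Ideal A)) : f = 0 :=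
  PowerSeries.ext fun i => by simpa using hf i

lemma C_mem_cJ {I : Ideal A} {a : A} (ha : a ∈ I) : C a ∈ cJ I := fun i => by
  rw [coeff_C]; split <;> simp [ha]

lemma mul_mem_cJ {I I' : Ideal A} {f h : PowerSeries A} (hf : f ∈ cJ I) (hh : h ∈ cJ I') :
    f * h ∈ cJ (I * I') := fun i => by
  rw [coeff_mul]
  exact Ideal.sum_mem _ fun p _ => Ideal.mul_mem_mul (hf p.1) (hh p.2)

def shf (f : PowerSeries A) : PowerSeries A := mk fun i => coeff (i + 1) f

lemma shf_spec (f : PowerSeries A) : f = C (constantCoeff f) + X * shf f := by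
  ext i
  cases i with
  | zero => simp [coeff_zero_eq_constantCoeff, map_mul]
  | succ n => simp [coeff_succ_X_mul, shf, coeff_C]

lemma shf_mem_cJ {I : Ideal A} {f : PowerSeries A} (hf : f ∈ cJ I) : shf f ∈ cJ I :=
  fun i => by simpa [shf] using hf (i + 1)

lemma X_sub_C_regular {α : A} (hα : IsNilpotent α) {f : PowerSeries A}
    (h : (X - C α) * f = 0) : f = 0 := by
  obtain ⟨N, hN⟩ := hα
  obtain ⟨s, hs⟩ : (X - C α) ∣ (X ^ N - (C α) ^ N) := sub_dvd_pow_sub_pow _ _ N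
  rw [← map_pow, hN, map_zero, sub_zero] at hs
  have h2 : X ^ N * f = 0 := by
    rw [hs, mul_comm (X - C α) s, mul_assoc, h, mul_zero]
  ext i
  have := congrArg (coeff (i + N)) h2
  rwa [coeff_X_pow_mul, map_zero] at this

lemma telescope {α : A} {N : ℕ} (hα : α ^ N = 0) (b : ℕ → A) :
    (∑ k ∈ Finset.range N, α ^ k * b k) - α * ∑ k ∈ Finset.range N, α ^ k * b (k + 1)
      = b 0 := by
  rw [Finset.mul_sum]
  have : ∀ k ∈ Finset.range N, α * (α ^ k * b (k + 1)) = α ^ (k + 1) * b (k + 1) := by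
    intro k _; rw [← mul_assoc, ← pow_succ']
  rw [Finset.sum_congr rfl this, ← Finset.sum_sub_distrib]
  have := Finset.sum_range_sub' (f := fun k => α ^ k * b k) N
  simpa [hα] using this

/-- remainder of division of `w` by `X - C α` -/
def remDiv (α : A) (N : ℕ) (w : PowerSeries A) : A :=
  ∑ k ∈ Finset.range N, α ^ k * coeff k w

/-- quotient of division of `w` by `X - C α` -/
def quotDiv (α : A) (N : ℕ) (w : PowerSeries A) : PowerSeries A :=
  mk fun i => ∑ k ∈ Finset.range N, α ^ k * coeff (i + 1 + k) w

lemma div_spec {α : A} {N : ℕ} (hα : α ^ N = 0) (w : PowerSeries A) :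
    w = C (remDiv α N w) + (X - C α) * quotDiv α N w := by
  ext i
  rw [map_add, sub_mul, map_sub, coeff_C]
  cases i with
  | zero =>
    have h0 : coeff 0 (X * quotDiv α N w) = 0 := by
      rw [coeff_zero_eq_constantCoeff, map_mul, constantCoeff_X, zero_mul]
    rw [if_pos rfl, h0, coeff_C_mul]
    have hq0 : coeff 0 (quotDiv α N w) = ∑ k ∈ Finset.range N, α ^ k * coeff (k + 1) w := by
      rw [quotDiv, coeff_mk]
      exact Finset.sum_congr rfl fun k _ => by rw [show 0 + 1 + k = k + 1 by omega]
    rw [hq0]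
    have ht := telescope hα (fun k => coeff k w)
    simp only [remDiv]
    linear_combination -ht
  | succ n =>
    rw [if_neg (Nat.succ_ne_zero n), coeff_succ_X_mul, coeff_C_mul]
    have ht := telescope hα (fun k => coeff (n + 1 + k) w)
    have e2 : ∑ k ∈ Finset.range N, α ^ k * coeff (n + 1 + (k + 1)) w
        = ∑ k ∈ Finset.range N, α ^ k * coeff (n + 1 + 1 + k) w :=
      Finset.sum_congr rfl fun k _ => by rw [show n + 1 + (k + 1) = n + 1 + 1 + k by omega]
    rw [e2, show n + 1 + 0 = n + 1 from rfl] at ht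
    simp only [quotDiv, coeff_mk]
    linear_combination -ht

lemma remDiv_mem {I : Ideal A} {α : A} {N : ℕ} {w : PowerSeries A} (hw : w ∈ cJ I) :
    remDiv α N w ∈ I :=
  Ideal.sum_mem _ fun k _ => Ideal.mul_mem_left _ _ (hw k)

lemma quotDiv_mem {I : Ideal A} {α : A} {N : ℕ} {w : PowerSeries A} (hw : w ∈ cJ I) :
    quotDiv α N w ∈ cJ I := fun i => by
  rw [quotDiv, coeff_mk]
  exact Ideal.sum_mem _ fun k _ => Ideal.mul_mem_left _ _ (hw _)

/-- key "constant multiple" lemma -/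
lemma const_eq_zero {I : Ideal A} {N : ℕ} (hN : I ^ N = ⊥) {α : A} (hα : α ∈ I)
    {w : PowerSeries A} {c : A} (h : (X - C α) * w = C c) : w = 0 ∧ c = 0 := by
  have key : ∀ j, w ∈ cJ (I ^ j) := by
    intro j
    induction j with
    | zero => intro i; simp
    | succ j ih =>
      intro i
      have hc := congrArg (coeff (i + 1)) h
      rw [sub_mul, map_sub, coeff_succ_X_mul, coeff_C_mul, coeff_C,
        if_neg (Nat.succ_ne_zero i)] at hc
      have hco : coeff i w = α * coeff (i + 1) w := by linear_combination hc
      rw [hco, pow_succ, mul_comm (I ^ j) I]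
      exact Ideal.mul_mem_mul hα (ih (i + 1))
  have hw0 : w = 0 := cJ_bot (by rw [← hN]; exact key N)
  rw [hw0, mul_zero] at h
  refine ⟨hw0, ?_⟩
  have := congrArg (coeff 0) h
  simpa [coeff_C] using this.symm

open IsLocalRing

section LocalRing
variable [IsLocalRing A]

lemma isUnit_of_sub_one_mem {c : A} (h : c - 1 ∈ maximalIdeal A) : IsUnit c := by
  by_contra h'
  have hc : c ∈ maximalIdeal A := (IsLocalRing.mem_maximalIdeal c).mpr h'
  have h1 : (1 : A) ∈ maximalIdeal A := by simpa using sub_mem hc h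
  exact (maximalIdeal.isMaximal A).ne_top ((Ideal.eq_top_iff_one _).mpr h1)

lemma fact_exists_aux {f : PowerSeries A} (hf : f - X ∈ cJ (maximalIdeal A)) (j : ℕ) :
    ∃ α ∈ maximalIdeal A, ∃ u, u - 1 ∈ cJ (maximalIdeal A) ∧
      f - (X - C α) * u ∈ cJ (maximalIdeal A ^ (j + 1)) := by
  set I := maximalIdeal A with hI
  induction j with
  | zero =>
    refine ⟨0, zero_mem _, shf f, ?_, ?_⟩
    · intro i
      have h1 := hf (i + 1)
      rw [map_sub] at h1
      rw [map_sub]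
      cases i with
      | zero => simpa [shf] using h1
      | succ m => simpa [shf, coeff_X, coeff_one] using h1
    · have hs := shf_spec f
      have : f - (X - C 0) * shf f = C (constantCoeff f) := by
        rw [map_zero]; linear_combination hs
      rw [this, pow_one]
      refine C_mem_cJ ?_
      have := hf 0
      simpa using this
  | succ j ih =>
    obtain ⟨α, hα, u, hu, hr⟩ := ih
    set r := f - (X - C α) * u with hrdef
    have hfr : f = (X - C α) * u + r := by rw [hrdef]; ring
    set r₁ := shf r with hr₁
    have hr₁m : r₁ ∈ cJ (I ^ (j + 1)) := shf_mem_cJ hr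
    set u₁ := u + r₁ with hu₁def
    have hu₁ : u₁ - 1 ∈ cJ I := by
      have : u₁ - 1 = (u - 1) + r₁ := by rw [hu₁def]; ring
      rw [this]
      exact add_mem hu (cJ_mono (Ideal.pow_le_self (Nat.succ_ne_zero j)) hr₁m)
    set c := constantCoeff u₁ with hcdef
    have hcu : IsUnit c := by
      refine isUnit_of_sub_one_mem ?_
      have := hu₁ 0
      simpa only [coeff_zero_eq_constantCoeff, map_sub, map_one] using this
    obtain ⟨v, hv⟩ := hcu.exists_right_inv
    set r₀ := constantCoeff r with hr₀def
    have hr₀m : r₀ ∈ I ^ (j + 1) := by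
      have := hr 0
      simpa [coeff_zero_eq_constantCoeff] using this
    set δ := -(r₀ * v) with hδdef
    have hδm : δ ∈ I ^ (j + 1) := neg_mem (Ideal.mul_mem_right _ _ hr₀m)
    set s := shf (C δ * u₁ + C r₀) with hsdef
    have hs0 : constantCoeff (C δ * u₁ + C r₀) = 0 := by
      rw [map_add, map_mul, constantCoeff_C, constantCoeff_C, ← hcdef, hδdef]
      linear_combination (-r₀) * hv
    have hXs : C δ * u₁ + C r₀ = X * s := by
      have := shf_spec (C δ * u₁ + C r₀)
      rw [hs0, map_zero, zero_add] at this
      exact this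
    have hrs : r = C r₀ + X * r₁ := by
      have := shf_spec r
      rwa [← hr₀def, ← hr₁] at this
    refine ⟨α + δ, add_mem hα (Ideal.pow_le_self (Nat.succ_ne_zero j) hδm), u₁ + s, ?_, ?_⟩
    · have hsm : s ∈ cJ (I ^ (j + 1)) :=
        shf_mem_cJ (add_mem (Ideal.mul_mem_right _ _ (C_mem_cJ hδm)) (C_mem_cJ hr₀m))
      have : u₁ + s - 1 = (u₁ - 1) + s := by ring
      rw [this]
      exact add_mem hu₁ (cJ_mono (Ideal.pow_le_self (Nat.succ_ne_zero j)) hsm)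
    · have hid : f - (X - C (α + δ)) * (u₁ + s) = C (α + δ) * s + C α * r₁ := by
        rw [map_add]
        linear_combination hfr + hrs + hXs
      rw [hid]
      have hsm : s ∈ cJ (I ^ (j + 1)) :=
        shf_mem_cJ (add_mem (Ideal.mul_mem_right _ _ (C_mem_cJ hδm)) (C_mem_cJ hr₀m))
      have hp : I * I ^ (j + 1) = I ^ (j + 1 + 1) := (pow_succ' I (j + 1)).symm
      refine add_mem ?_ ?_
      · have := mul_mem_cJ (C_mem_cJ (add_mem hα (Ideal.pow_le_self (Nat.succ_ne_zero j) hδm))) hsm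
        rwa [hp] at this
      · have := mul_mem_cJ (C_mem_cJ hα) hr₁m
        rwa [hp] at this

lemma fact_exists {N : ℕ} (hN : maximalIdeal A ^ N = ⊥) {f : PowerSeries A}
    (hf : f - X ∈ cJ (maximalIdeal A)) :
    ∃ α ∈ maximalIdeal A, ∃ u, u - 1 ∈ cJ (maximalIdeal A) ∧ f = (X - C α) * u := by
  obtain ⟨α, hα, u, hu, hr⟩ := fact_exists_aux hf N
  refine ⟨α, hα, u, hu, ?_⟩
  have hb : maximalIdeal A ^ (N + 1) = ⊥ :=
    le_bot_iff.mp (le_trans (Ideal.pow_le_pow_right (Nat.le_succ N)) hN.le)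
  have := cJ_bot (by rw [← hb]; exact hr)
  linear_combination this

lemma fact_unique {N : ℕ} (hN : maximalIdeal A ^ N = ⊥) {α α' : A} {u u' : PowerSeries A}
    (hα : α ∈ maximalIdeal A) (hα' : α' ∈ maximalIdeal A)
    (hu : u - 1 ∈ cJ (maximalIdeal A)) (hu' : u' - 1 ∈ cJ (maximalIdeal A))
    (h : (X - C α) * u = (X - C α') * u') : α = α' ∧ u = u' := by
  set I := maximalIdeal A with hI
  set β := α' - α with hβ
  set w := u - u' with hw
  have heq : (X - C α) * w = -(C β * u') := by
    have hc : C β = C α' - C α := by rw [hβ, map_sub]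
    rw [hw, hc]
    linear_combination h
  have hc'u : IsUnit (constantCoeff u') := by
    refine isUnit_of_sub_one_mem ?_
    have := hu' 0
    simpa only [coeff_zero_eq_constantCoeff, map_sub, map_one] using this
  obtain ⟨v, hv⟩ := hc'u.exists_right_inv
  have key : ∀ j, β ∈ I ^ (j + 1) ∧ w ∈ cJ (I ^ (j + 1)) := by
    intro j
    induction j with
    | zero =>
      constructor
      · rw [pow_one]; exact sub_mem hα' hα
      · rw [pow_one]
        have : w = (u - 1) - (u' - 1) := by rw [hw]; ring
        rw [this]; exact sub_mem hu hu'
    | succ j ih =>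
      obtain ⟨hβm, hwm⟩ := ih
      have hp : I * I ^ (j + 1) = I ^ (j + 1 + 1) := (pow_succ' I (j + 1)).symm
      have hwm' : w ∈ cJ (I ^ (j + 1 + 1)) := by
        intro i
        have hc := congrArg (coeff (i + 1)) heq
        rw [sub_mul, map_sub, coeff_succ_X_mul, coeff_C_mul, map_neg, coeff_C_mul] at hc
        have hco : coeff i w = α * coeff (i + 1) w - coeff (i + 1) u' * β := by
          linear_combination hc
        have hu'c : coeff (i + 1) u' ∈ I := by
          have := hu' (i + 1)
          simpa [coeff_one] using this
        rw [hco, ← hp]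
        refine sub_mem (Ideal.mul_mem_mul hα (hwm (i + 1))) ?_
        have := Ideal.mul_mem_mul hu'c hβm
        exact this
      refine ⟨?_, hwm'⟩
      have hc := congrArg (constantCoeff) heq
      rw [map_mul, map_sub, constantCoeff_X, constantCoeff_C, map_neg, map_mul,
        constantCoeff_C] at hc
      have hβc : β * constantCoeff u' = α * constantCoeff w := by linear_combination hc
      have hm : β * constantCoeff u' ∈ I ^ (j + 1 + 1) := by
        rw [hβc, ← hp]
        refine Ideal.mul_mem_mul hα ?_
        have := hwm 0
        simpa [coeff_zero_eq_constantCoeff] using this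
      have : β = (β * constantCoeff u') * v := by
        rw [mul_assoc, hv, mul_one]
      rw [this]
      exact Ideal.mul_mem_right _ _ hm
  obtain ⟨hβm, hwm⟩ := key N
  have hb : I ^ (N + 1) = ⊥ :=
    le_bot_iff.mp (le_trans (Ideal.pow_le_pow_right (Nat.le_succ N)) hN.le)
  rw [hb] at hβm hwm
  have h1 : β = 0 := by simpa using hβm
  have h2 : w = 0 := cJ_bot hwm
  constructor
  · rw [hβ] at h1; linear_combination -h1
  · rw [hw] at h2; linear_combination h2

end LocalRing

section Aeval

/-- `C` as an algebra hom over `k`. -/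
def Calg (k : Type*) [CommSemiring k] [Algebra k A] : A →ₐ[k] PowerSeries A :=
  { toRingHom := C, commutes' := fun r => (PowerSeries.algebraMap_apply (R := k)).symm }

lemma aeval_C_eq {k : Type*} [CommSemiring k] [Algebra k A] {n : ℕ}
    (g : MvPolynomial (Fin n) k) (ξ : Fin n → A) :
    MvPolynomial.aeval (fun i => C (ξ i)) g = C (MvPolynomial.aeval ξ g) :=
  by
  have h := MvPolynomial.comp_aeval_apply ξ (Calg (A := A) k) g
  exact h.symm

lemma aeval_sub_mem {k B : Type*} [CommRing k] [CommRing B] [Algebra k B] {n : ℕ}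
    (I : Ideal B) {x x' : Fin n → B} (h : ∀ i, x i - x' i ∈ I)
    (p : MvPolynomial (Fin n) k) :
    MvPolynomial.aeval x p - MvPolynomial.aeval x' p ∈ I := by
  refine Ideal.Quotient.eq.mp ?_
  rw [MvPolynomial.map_aeval, MvPolynomial.map_aeval]
  have : (fun i => Ideal.Quotient.mk I (x i)) = fun i => Ideal.Quotient.mk I (x' i) :=
    funext fun i => Ideal.Quotient.eq.mpr (h i)
  rw [this]

lemma aeval_mem_cJ {k : Type*} [CommRing k] [Algebra k A] {n : ℕ}
    {g : MvPolynomial (Fin n) k} (hg : MvPolynomial.constantCoeff g = 0) {I : Ideal A}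
    {x : Fin n → PowerSeries A} (hx : ∀ i, x i ∈ cJ I) :
    MvPolynomial.aeval x g ∈ cJ I := by
  have h1 : g ∈ Ideal.span (MvPolynomial.X '' (Set.univ : Set (Fin n))) := by
    rw [MvPolynomial.mem_ideal_span_X_image]
    intro m hm
    rcases eq_or_ne m 0 with rfl | hne
    · exact absurd hg (by simpa [MvPolynomial.constantCoeff_eq] using
        MvPolynomial.mem_support_iff.mp hm)
    · obtain ⟨i, hi⟩ := Finsupp.ne_iff.mp hne
      exact ⟨i, Set.mem_univ i, by simpa using hi⟩
  have h2 := Ideal.mem_map_of_mem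
    (↑(MvPolynomial.aeval (R := k) x) : MvPolynomial (Fin n) k →+* PowerSeries A) h1
  rw [Ideal.map_span] at h2
  refine Ideal.span_le.mpr ?_ h2
  rintro _ ⟨_, ⟨i, -, rfl⟩, rfl⟩
  simpa using hx i

end Aeval

end AuxHypersurface

/-- **Example: arcs on the hypersurface `y·x_{n+1} + g(x₁,…,xₙ) = 0`.**
Over a test ring `A`, the set of solutions `(x, x_{n+1}, y)` with `x_i ∈ m[[t]]`,
`x_{n+1} ∈ t + m[[t]]`, `y ∈ m[[t]]` is in bijection with the set of tuples
`(α, u, x̃, ξ)` with `α ∈ m`, `u ∈ 1 + m[[t]]`, `x̃_i ∈ m[[t]]`, `ξ_i ∈ m`, `g(ξ) = 0`;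
the bijection sends `(α,u,x̃,ξ)` to the tuple with `x_{n+1} = (t−α)·u`,
`x_i = ξ_i + (t−α)·x̃_i`, and `y` the unique solution of the equation. -/
theorem hypersurface_arc_bijection {k : Type*} [Field k] {n : ℕ} (hn : 1 ≤ n)
    (g : MvPolynomial (Fin n) k) (hg : MvPolynomial.constantCoeff g = 0)
    (A : Type*) [CommRing A] [Algebra k A] [IsLocalRing A]
    (hnil : IsNilpotent (maximalIdeal A))
    (hres : Function.Bijective (algebraMap k (ResidueField A))) :
    (∀ q ∈ dataSet g A, ∃! p, p ∈ arcSet g A ∧ arcDataRel k A q p) ∧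
    (∀ p ∈ arcSet g A, ∃! q, q ∈ dataSet g A ∧ arcDataRel k A q p) := by
  classical
  obtain ⟨N0, hN0⟩ := hnil
  have hN : maximalIdeal A ^ N0 = ⊥ := by rw [← Ideal.zero_eq_bot]; exact hN0
  have hnilβ : ∀ a ∈ maximalIdeal A, a ^ N0 = 0 := by
    intro a ha
    have h1 : a ^ N0 ∈ maximalIdeal A ^ N0 := Ideal.pow_mem_pow ha N0
    rw [hN] at h1
    simpa using h1
  constructor
  · rintro ⟨α, u, xt, ξ⟩ ⟨hα, hu, hxt, hξ, hgξ⟩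
    dsimp only at hα hu hxt hξ hgξ
    obtain ⟨x, hxdef⟩ : ∃ x : Fin n → PowerSeries A,
        x = fun i => PowerSeries.C (ξ i) + (PowerSeries.X - PowerSeries.C α) * xt i :=
      ⟨_, rfl⟩
    obtain ⟨f, hfdef⟩ : ∃ f : PowerSeries A,
        f = (PowerSeries.X - PowerSeries.C α) * u := ⟨_, rfl⟩
    have hxi : ∀ i, x i = PowerSeries.C (ξ i)
        + (PowerSeries.X - PowerSeries.C α) * xt i := fun i => by rw [hxdef]
    have hCξ : MvPolynomial.aeval (fun i => PowerSeries.C (ξ i)) g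
        = PowerSeries.C (MvPolynomial.aeval ξ g) := aeval_C_eq g ξ
    have hspan : MvPolynomial.aeval x g
        ∈ Ideal.span {PowerSeries.X - PowerSeries.C α} := by
      have hdiff := aeval_sub_mem (Ideal.span {PowerSeries.X - PowerSeries.C α})
        (x := x) (x' := fun i => PowerSeries.C (ξ i)) (fun i => by
          rw [hxi i]
          have heq2 : PowerSeries.C (ξ i) + (PowerSeries.X - PowerSeries.C α) * xt i
              - PowerSeries.C (ξ i) = (PowerSeries.X - PowerSeries.C α) * xt i := by ring
          rw [heq2]
          exact Ideal.mem_span_singleton.mpr (Dvd.intro _ rfl)) g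
      rw [hCξ, hgξ, map_zero, sub_zero] at hdiff
      exact hdiff
    obtain ⟨h, hh⟩ := Ideal.mem_span_singleton.mp hspan
    have hxcJ : ∀ i, x i ∈ cJ (maximalIdeal A) := fun i => by
      rw [hxi i]
      exact add_mem (C_mem_cJ (hξ i)) (Ideal.mul_mem_left _ _ (hxt i))
    have hgx : MvPolynomial.aeval x g ∈ cJ (maximalIdeal A) := aeval_mem_cJ hg hxcJ
    have hhm : h ∈ cJ (maximalIdeal A) := by
      intro i
      have hc := congrArg (PowerSeries.coeff (i + 1)) hh
      rw [sub_mul, map_sub, PowerSeries.coeff_succ_X_mul, PowerSeries.coeff_C_mul] at hc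
      have hco : PowerSeries.coeff i h = α * PowerSeries.coeff (i + 1) h
          + PowerSeries.coeff (i + 1) (MvPolynomial.aeval x g) := by linear_combination -hc
      rw [hco]
      exact add_mem (Ideal.mul_mem_right _ _ hα) (hgx (i + 1))
    have hcu : IsUnit (PowerSeries.constantCoeff u) := by
      refine isUnit_of_sub_one_mem ?_
      have := hu 0
      simpa using this
    obtain ⟨v, hv⟩ := (PowerSeries.isUnit_iff_constantCoeff.mpr hcu).exists_right_inv
    obtain ⟨y, hydef⟩ : ∃ y : PowerSeries A, y = -(h * v) := ⟨_, rfl⟩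
    have heqn : y * f + MvPolynomial.aeval x g = 0 := by
      rw [hydef, hfdef, hh]
      linear_combination (-((PowerSeries.X - PowerSeries.C α) * h)) * hv
    have hfX : f - PowerSeries.X ∈ cJ (maximalIdeal A) := by
      have heq2 : f - PowerSeries.X
          = (PowerSeries.X - PowerSeries.C α) * (u - 1) - PowerSeries.C α := by
        rw [hfdef]; ring
      rw [heq2]
      exact sub_mem (Ideal.mul_mem_left _ _ hu) (C_mem_cJ hα)
    have hym : y ∈ cJ (maximalIdeal A) := by
      rw [hydef]
      exact neg_mem (Ideal.mul_mem_right _ _ hhm)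
    refine ⟨(x, f, y), ⟨⟨fun i j => hxcJ i j, fun j => hfX j, fun j => hym j, heqn⟩,
      hfdef, hxi⟩, ?_⟩
    rintro ⟨x', f', y'⟩ ⟨⟨hx'm, hf'm, hy'm, heqn'⟩, hrel1, hrel2⟩
    dsimp only at hx'm hf'm hy'm heqn' hrel1 hrel2
    have hf' : f' = f := by rw [hrel1, hfdef]
    have hx' : x' = x := funext fun i => by rw [hrel2 i, hxi i]
    have hy' : y' = y := by
      rw [hf', hx'] at heqn'
      have hd0 : (y' - y) * f = 0 := by linear_combination heqn' - heqn
      rw [hfdef] at hd0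
      have h2 : (y' - y) * (PowerSeries.X - PowerSeries.C α) * (u * v) = 0 := by
        linear_combination v * hd0
      rw [hv, mul_one] at h2
      have h3 : (PowerSeries.X - PowerSeries.C α) * (y' - y) = 0 := by
        linear_combination h2
      have h4 := X_sub_C_regular ⟨N0, hnilβ α hα⟩ h3
      linear_combination h4
    rw [hx', hf', hy']
  · rintro ⟨x, f, y⟩ ⟨hx, hf, hy, heqn⟩
    dsimp only at hx hf hy heqn
    obtain ⟨α, hα, u, hu, hfu⟩ := fact_exists hN (fun j => hf j)
    have hαnil : α ^ N0 = 0 := hnilβ α hα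
    obtain ⟨ξ, hξdef⟩ : ∃ ξ : Fin n → A, ξ = fun i => remDiv α N0 (x i) := ⟨_, rfl⟩
    obtain ⟨xt, hxtdef⟩ : ∃ xt : Fin n → PowerSeries A,
        xt = fun i => quotDiv α N0 (x i) := ⟨_, rfl⟩
    have hdiv : ∀ i, x i = PowerSeries.C (ξ i)
        + (PowerSeries.X - PowerSeries.C α) * xt i := fun i => by
      rw [hξdef, hxtdef]
      exact div_spec hαnil (x i)
    have hξm : ∀ i, ξ i ∈ maximalIdeal A := fun i => by
      rw [hξdef]; exact remDiv_mem (fun j => hx i j)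
    have hxtm : ∀ i, xt i ∈ cJ (maximalIdeal A) := fun i => by
      rw [hxtdef]; exact quotDiv_mem (fun j => hx i j)
    have hCξ : MvPolynomial.aeval (fun i => PowerSeries.C (ξ i)) g
        = PowerSeries.C (MvPolynomial.aeval ξ g) := aeval_C_eq g ξ
    have hgξ : MvPolynomial.aeval ξ g = 0 := by
      have h1 := aeval_sub_mem (Ideal.span {PowerSeries.X - PowerSeries.C α})
        (x := fun i => PowerSeries.C (ξ i)) (x' := x) (fun i => by
          rw [hdiv i]
          have heq2 : PowerSeries.C (ξ i) - (PowerSeries.C (ξ i)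
              + (PowerSeries.X - PowerSeries.C α) * xt i)
              = (PowerSeries.X - PowerSeries.C α) * (-(xt i)) := by ring
          rw [heq2]
          exact Ideal.mem_span_singleton.mpr (Dvd.intro _ rfl)) g
      have h2 : MvPolynomial.aeval x g
          ∈ Ideal.span {PowerSeries.X - PowerSeries.C α} := by
        have ha : MvPolynomial.aeval x g
            = (PowerSeries.X - PowerSeries.C α) * (-(y * u)) := by
          rw [show (PowerSeries.X - PowerSeries.C α) * (-(y * u)) = -(y * ((PowerSeries.X
            - PowerSeries.C α) * u)) from by ring, ← hfu]
          linear_combination heqn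
        rw [ha]
        exact Ideal.mem_span_singleton.mpr (Dvd.intro _ rfl)
      have h3 : PowerSeries.C (MvPolynomial.aeval ξ g)
          ∈ Ideal.span {PowerSeries.X - PowerSeries.C α} := by
        rw [← hCξ]
        have h4 := add_mem h1 h2
        simpa using h4
      obtain ⟨w, hw⟩ := Ideal.mem_span_singleton.mp h3
      exact (const_eq_zero hN hα hw.symm).2
    refine ⟨(α, u, xt, ξ), ⟨⟨hα, fun j => hu j, fun i j => hxtm i j, hξm, hgξ⟩,
      hfu, hdiv⟩, ?_⟩
    rintro ⟨α', u', xt', ξ'⟩ ⟨⟨hα', hu', hxt'm, hξ'm, hgξ'⟩, hrel1, hrel2⟩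
    dsimp only at hα' hu' hxt'm hξ'm hgξ' hrel1 hrel2
    obtain ⟨hαeq, hueq⟩ := fact_unique hN hα' hα (fun j => hu' j) hu (hrel1.symm.trans hfu)
    subst hαeq
    have hkey : ∀ i, xt' i = xt i ∧ ξ i = ξ' i := by
      intro i
      have hk : (PowerSeries.X - PowerSeries.C α') * (xt' i - xt i)
          = PowerSeries.C (ξ i - ξ' i) := by
        rw [map_sub]
        linear_combination (hdiv i) - (hrel2 i)
      obtain ⟨hw0, hc0⟩ := const_eq_zero hN hα' hk
      exact ⟨sub_eq_zero.mp (by linear_combination hw0), sub_eq_zero.mp hc0⟩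
    have h3 : xt' = xt := funext fun i => (hkey i).1
    have h4 : ξ' = ξ := funext fun i => ((hkey i).2).symm
    rw [hueq, h3, h4]

end
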